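/- Fix x₁, x₂ ∈ ℝ^d with |x₁ - x₂| ≥ ε₀ > ε > 0, and fix v₁ ∈ ℝ^d. The set of velocities v₂ ∈ ℝ^d such that there exists s > 0 with |x₁ - x₂ - s(v₁ - v₂)| ≤ ε is contained in the set v₁ + K, where K is the cone of directions w ∈ ℝ^d \ {0} with angle to (x₁ - x₂) at most arcsin(ε/ε₀) (i.e., the cone {w : ∃ s > 0, |x₁ - x₂ - s w| ≤ ε} has aperture at most arcsin(ε/ε₀) around x₁ - x₂). -/

import Mathlib

open RealInnerProductSpace InnerProductGeometry

theorem recollision_cone {d : ℕ} (ε ε₀ : ℝ) (hε : 0 < ε) (hεε₀ : ε < ε₀)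
    (x₁ x₂ v₁ : EuclideanSpace ℝ (Fin d)) (hx : ε₀ ≤ ‖x₁ - x₂‖) :
    {v₂ : EuclideanSpace ℝ (Fin d) |
        ∃ s : ℝ, 0 < s ∧ ‖x₁ - x₂ - s • (v₁ - v₂)‖ ≤ ε} ⊆
      {v₂ : EuclideanSpace ℝ (Fin d) |
        v₁ - v₂ ≠ 0 ∧ angle (v₁ - v₂) (x₁ - x₂) ≤ Real.arcsin (ε / ε₀)} := by
  intro v₂ hv₂
  obtain ⟨s, hs, hle⟩ := hv₂
  set u : EuclideanSpace ℝ (Fin d) := x₁ - x₂ with hu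
  set w : EuclideanSpace ℝ (Fin d) := v₁ - v₂ with hw
  have hε₀ : (0:ℝ) < ε₀ := hε.trans hεε₀
  have hu0 : (0:ℝ) < ‖u‖ := lt_of_lt_of_le hε₀ hx
  have hwne : w ≠ 0 := by
    intro h
    rw [h, smul_zero, sub_zero] at hle
    linarith
  refine ⟨hwne, ?_⟩
  have hnw : (0:ℝ) < ‖w‖ := norm_pos_iff.mpr hwne
  -- expand the norm squared
  have hexp : ‖u - s • w‖^2 = ‖u‖^2 - 2*s*⟪w,u⟫ + s^2*‖w‖^2 := by
    rw [@norm_sub_sq_real, real_inner_smul_right, norm_smul, real_inner_comm]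
    simp [mul_pow, sq_abs]
    ring
  have hsq : ‖u‖^2 - 2*s*⟪w,u⟫ + s^2*‖w‖^2 ≤ ε^2 := by
    rw [← hexp]
    nlinarith [norm_nonneg (u - s • w)]
  set a : ℝ := ⟪w,u⟫ with ha
  have hapos : 0 < a := by nlinarith
  have hkey : ‖w‖^2 * (‖u‖^2 - ε^2) ≤ a^2 := by
    nlinarith [sq_nonneg (s * ‖w‖^2 - a)]
  set θ := angle w u with hθ
  have hcos : Real.cos θ = a / (‖w‖ * ‖u‖) := cos_angle w u
  have hcospos : 0 < Real.cos θ := by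
    rw [hcos]; positivity
  have hθ0 : 0 ≤ θ := angle_nonneg w u
  have hθpi : θ ≤ Real.pi := angle_le_pi w u
  have hθhalf : θ ≤ Real.pi / 2 := by
    by_contra h
    push_neg at h
    have := Real.cos_neg_of_pi_div_two_lt_of_lt h (by linarith [Real.pi_pos])
    linarith
  have hsin : Real.sin θ = Real.sqrt (1 - Real.cos θ ^ 2) :=
    Real.sin_eq_sqrt_one_sub_cos_sq hθ0 hθpi
  have hone : 1 - Real.cos θ ^ 2 ≤ (ε / ε₀)^2 := by
    have hc2 : Real.cos θ ^ 2 = a^2 / (‖w‖^2 * ‖u‖^2) := by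
      rw [hcos]; field_simp
    rw [hc2, div_pow, one_sub_div (by positivity : ‖w‖^2 * ‖u‖^2 ≠ 0),
      div_le_div_iff₀ (by positivity) (by positivity)]
    have h1 : ε₀^2 ≤ ‖u‖^2 := by nlinarith
    linarith [mul_nonneg (mul_nonneg (sq_nonneg ε) (sq_nonneg ‖w‖)) (sub_nonneg.mpr h1),
      mul_le_mul_of_nonneg_right hkey (sq_nonneg ε₀)]
  have hsinle : Real.sin θ ≤ ε / ε₀ := by
    rw [hsin]
    calc Real.sqrt (1 - Real.cos θ ^ 2) ≤ Real.sqrt ((ε/ε₀)^2) :=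
          Real.sqrt_le_sqrt hone
      _ = ε / ε₀ := Real.sqrt_sq (by positivity)
  have : θ = Real.arcsin (Real.sin θ) :=
    (Real.arcsin_sin (by linarith [Real.pi_pos]) hθhalf).symm
  rw [this]
  exact Real.monotone_arcsin hsinle
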